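/- arXiv:1905.11283 — 4 statements merged into one kernel-verified Lean document; each statement's English description precedes it below -/
import Mathlib

section
/- Let n ∈ ℕ, ℓ ∈ ℤ, z ∈ ℂ, and define 𝔍(θ) = (i^n/2π) e^{i n (θ − π·sgn θ)} e^{i z cos θ} P(n, −i z (1 − cos θ)) for θ ∈ [−π, π]. Then the Fourier coefficients of 𝔍 satisfy the symmetry ∫_{−π}^{π} 𝔍(θ) e^{iℓθ} dθ = ∫_{−π}^{π} 𝔍(θ) e^{−i(ℓ+2n)θ} dθ. -/
open Complex Real MeasureTheory Filter Topology Finset intervalIntegral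

/-- Bessel function of the first kind `J_μ(z)`. -/
noncomputable def besselJ (μ z : ℂ) : ℂ :=
  (z / 2) ^ μ * ∑' k : ℕ, (-1) ^ k * (z / 2) ^ (2 * k) / ((k.factorial : ℂ) * Complex.Gamma (μ + k + 1))

/-- Modified Bessel function of the first kind `I_μ(z)`. -/
noncomputable def besselI (μ z : ℂ) : ℂ :=
  (z / 2) ^ μ * ∑' k : ℕ, (z / 2) ^ (2 * k) / ((k.factorial : ℂ) * Complex.Gamma (μ + k + 1))

/-- Tricomi's entire incomplete gamma function `γ*(ν,w)`. -/
noncomputable def gammaStar (ν w : ℂ) : ℂ :=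
  Complex.exp (-w) * ∑' m : ℕ, w ^ m / Complex.Gamma (ν + m + 1)

/-- Normalised lower incomplete gamma function `P(ν,w) = w^ν γ*(ν,w)`. -/
noncomputable def Pgamma (ν w : ℂ) : ℂ := w ^ ν * gammaStar ν w

/-- Nearest integer to `x`, with `⟨n+1/2⟩ = n`. -/
noncomputable def nearestInt (x : ℝ) : ℤ := ⌈x - 1 / 2⌉

/-- Complex fractional part `{μ} = μ - ⟨Re μ⟩`. -/
noncomputable def fracPart (μ : ℂ) : ℂ := μ - (nearestInt μ.re : ℂ)

/-- The corrective term `χ_μ(z)`; the sum is empty (hence `χ_μ(z) = 0`) when `Re μ > -1/2`. -/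
noncomputable def chi (μ z : ℂ) : ℂ :=
  Complex.I ^ μ / (Real.sqrt π : ℂ) * Complex.exp (Complex.I * z) *
    ∑ j ∈ Finset.Icc (1 : ℤ) (-(nearestInt μ.re)),
      Complex.Gamma ((j : ℂ) + μ - 1 / 2) /
          (Complex.Gamma (j : ℂ) * Complex.Gamma ((j : ℂ) + 2 * μ)) *
        (-2 * Complex.I * z) ^ ((j : ℂ) + μ - 1)

/-- The integral term `B_μ(z)`. -/
noncomputable def besselB (μ z : ℂ) : ℂ :=
  Complex.I ^ μ / (π : ℂ) * ∫ θ in (0 : ℝ)..π,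
    Complex.exp (-Complex.I * z * (Real.cos θ : ℂ)) *
      Pgamma (fracPart μ) (-Complex.I * z * (1 + (Real.cos θ : ℂ))) * Complex.cos (μ * θ)

/-- Error function. -/
noncomputable def cerf (z : ℂ) : ℂ :=
  (2 / (Real.sqrt π : ℂ)) * ∫ t in (0 : ℝ)..1, z * Complex.exp (-((t : ℂ) * z) ^ 2)

/-- Dawson's integral. -/
noncomputable def dawson (z : ℂ) : ℂ :=
  Complex.exp (-z ^ 2) * ∫ t in (0 : ℝ)..1, z * Complex.exp (((t : ℂ) * z) ^ 2)

/-- Spherical Bessel function of the first kind. -/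
noncomputable def sphericalJ (m : ℤ) (z : ℂ) : ℂ :=
  ((π : ℂ) / (2 * z)) ^ (1 / 2 : ℂ) * besselJ ((m : ℂ) + 1 / 2) z

/-- Upper incomplete gamma function `Γ(0,w)`. -/
noncomputable def Gamma0 (w : ℂ) : ℂ :=
  -(Real.eulerMascheroniConstant : ℂ) - Complex.log w -
    ∑' k : ℕ, (-w) ^ (k + 1) / (((k : ℂ) + 1) * ((k + 1).factorial : ℂ))

/-- The finite sum `σ_m(z)`. -/
noncomputable def sigmaSum (m : ℤ) (z : ℂ) : ℂ :=
  (-1 : ℂ) ^ m / (Real.sqrt π : ℂ) * Complex.exp (Complex.I * z) *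
    ∑ j ∈ Finset.Icc (1 : ℤ) |m|,
      Complex.Gamma (1 / 2 - (j : ℂ)) * Complex.Gamma ((j : ℂ) + ((|m| : ℤ) : ℂ)) /
          Complex.Gamma (((|m| : ℤ) : ℂ) - (j : ℂ) + 1) *
        (2 * Complex.I * z) ^ (-j)

/-- Symmetry of the Fourier coefficients of `𝔍` for nonnegative integer order
(formula (2.5) of the paper). -/
theorem fourier_coeff_symm_int (n : ℕ) (ℓ : ℤ) (z : ℂ) (𝔍 : ℝ → ℂ)
    (h𝔍 : ∀ θ : ℝ, 𝔍 θ =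
      Complex.I ^ n / (2 * (π : ℂ)) *
        Complex.exp (Complex.I * (n : ℂ) * ((θ : ℂ) - (π : ℂ) * (Real.sign θ : ℂ))) *
        Complex.exp (Complex.I * z * (Real.cos θ : ℂ)) *
        Pgamma (n : ℂ) (-Complex.I * z * (1 - (Real.cos θ : ℂ)))) :
    (∫ θ in (-π : ℝ)..π, 𝔍 θ * Complex.exp (Complex.I * (ℓ : ℂ) * (θ : ℂ))) =
      ∫ θ in (-π : ℝ)..π, 𝔍 θ * Complex.exp (-Complex.I * ((ℓ : ℂ) + 2 * (n : ℂ)) * (θ : ℂ)) := by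
  have key : (∫ θ in (-π : ℝ)..π, 𝔍 θ * Complex.exp (Complex.I * (ℓ : ℂ) * (θ : ℂ))) =
      ∫ θ in (-π : ℝ)..π,
        𝔍 (-θ) * Complex.exp (Complex.I * (ℓ : ℂ) * ((-θ : ℝ) : ℂ)) := by
    rw [intervalIntegral.integral_comp_neg (fun θ : ℝ =>
      𝔍 θ * Complex.exp (Complex.I * (ℓ : ℂ) * (θ : ℂ))), neg_neg]
  rw [key]
  apply intervalIntegral.integral_congr
  intro θ _
  dsimp only
  have hs : ∃ k : ℤ, (Real.sign θ : ℂ) = (k : ℂ) := by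
    rcases lt_trichotomy θ 0 with h | h | h
    · exact ⟨-1, by rw [Real.sign_of_neg h]; push_cast; ring⟩
    · exact ⟨0, by rw [h, Real.sign_zero]; push_cast; ring⟩
    · exact ⟨1, by rw [Real.sign_of_pos h]; push_cast; ring⟩
  obtain ⟨k, hk⟩ := hs
  have h1 : Complex.exp (Complex.I * (n : ℂ) * (((-θ : ℝ) : ℂ) - (π : ℂ) * (Real.sign (-θ) : ℂ))) *
      Complex.exp (Complex.I * (ℓ : ℂ) * ((-θ : ℝ) : ℂ)) =
      Complex.exp (Complex.I * (n : ℂ) * ((θ : ℂ) - (π : ℂ) * (Real.sign θ : ℂ))) *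
      Complex.exp (-Complex.I * ((ℓ : ℂ) + 2 * (n : ℂ)) * (θ : ℂ)) := by
    rw [← Complex.exp_add, ← Complex.exp_add, Real.sign_neg]
    push_cast [hk]
    rw [show Complex.I * (n : ℂ) * (-(θ : ℂ) - (π : ℂ) * (-(k : ℂ))) +
        Complex.I * (ℓ : ℂ) * (-(θ : ℂ)) =
        (Complex.I * (n : ℂ) * ((θ : ℂ) - (π : ℂ) * (k : ℂ)) +
          -Complex.I * ((ℓ : ℂ) + 2 * (n : ℂ)) * (θ : ℂ)) + ((n * k : ℤ) : ℂ) * (2 * π * Complex.I)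
        by push_cast; ring]
    rw [Complex.exp_add, Complex.exp_int_mul_two_pi_mul_I, mul_one]
  rw [h𝔍 (-θ), h𝔍 θ, Real.cos_neg]
  linear_combination (Complex.I ^ n / (2 * (π : ℂ)) *
    Complex.exp (Complex.I * z * (Real.cos θ : ℂ)) *
    Pgamma (n : ℂ) (-Complex.I * z * (1 - (Real.cos θ : ℂ)))) * h1
end

section
/- Let n ∈ ℕ, ℓ ∈ ℤ, z ∈ ℂ, set ν = n + 1/2, and define 𝔍(θ) = (i^ν/2π) e^{i ν (θ − π·sgn θ)} e^{i z cos θ} P(ν, −i z (1 − cos θ)) for θ ∈ [−π, π]. Then the Fourier coefficients of 𝔍 satisfy the antisymmetry ∫_{−π}^{π} 𝔍(θ) e^{iℓθ} dθ = − ∫_{−π}^{π} 𝔍(θ) e^{−i(ℓ+2n+1)θ} dθ. -/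
open Complex Real MeasureTheory Filter Topology Finset intervalIntegral

lemma exp_add_odd_pi_I (m : ℤ) (hm : Odd m) (B : ℂ) :
    Complex.exp (B + (m : ℂ) * ((π : ℂ) * Complex.I)) = -Complex.exp B := by
  rw [Complex.exp_add, Complex.exp_int_mul, Complex.exp_pi_mul_I, hm.neg_one_zpow, mul_neg_one]

/-- Antisymmetry of the Fourier coefficients of `𝔍` for nonnegative half-integer order
(formula (2.6) of the paper). -/
theorem fourier_coeff_antisymm_half_int (n : ℕ) (ℓ : ℤ) (z : ℂ) (𝔍 : ℝ → ℂ)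
    (h𝔍 : ∀ θ : ℝ, 𝔍 θ =
      Complex.I ^ ((n : ℂ) + 1 / 2) / (2 * (π : ℂ)) *
        Complex.exp (Complex.I * ((n : ℂ) + 1 / 2) * ((θ : ℂ) - (π : ℂ) * (Real.sign θ : ℂ))) *
        Complex.exp (Complex.I * z * (Real.cos θ : ℂ)) *
        Pgamma ((n : ℂ) + 1 / 2) (-Complex.I * z * (1 - (Real.cos θ : ℂ)))) :
    (∫ θ in (-π : ℝ)..π, 𝔍 θ * Complex.exp (Complex.I * (ℓ : ℂ) * (θ : ℂ))) =
      -∫ θ in (-π : ℝ)..π, 𝔍 θ *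
          Complex.exp (-Complex.I * ((ℓ : ℂ) + 2 * (n : ℂ) + 1) * (θ : ℂ)) := by
  have h2 : ∀ θ : ℝ, θ ≠ 0 →
      𝔍 (-θ) * Complex.exp (Complex.I * (ℓ : ℂ) * ((-θ : ℝ) : ℂ)) =
      -(𝔍 θ * Complex.exp (-Complex.I * ((ℓ : ℂ) + 2 * (n : ℂ) + 1) * (θ : ℂ))) := by
    intro θ hθ
    rw [h𝔍 (-θ), h𝔍 θ, Real.cos_neg, Real.sign_neg]
    rcases lt_or_gt_of_ne hθ with h | h
    · rw [Real.sign_of_neg h]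
      have key : Complex.exp (Complex.I * ((n : ℂ) + 1 / 2) *
            (((-θ : ℝ) : ℂ) - (π : ℂ) * ((-(-1 : ℝ) : ℝ) : ℂ))) *
          Complex.exp (Complex.I * (ℓ : ℂ) * ((-θ : ℝ) : ℂ)) =
          -(Complex.exp (Complex.I * ((n : ℂ) + 1 / 2) *
            ((θ : ℂ) - (π : ℂ) * ((-1 : ℝ) : ℂ))) *
          Complex.exp (-Complex.I * ((ℓ : ℂ) + 2 * (n : ℂ) + 1) * (θ : ℂ))) := by
        rw [← Complex.exp_add, ← Complex.exp_add]
        have harg : Complex.I * ((n : ℂ) + 1 / 2) *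
            (((-θ : ℝ) : ℂ) - (π : ℂ) * ((-(-1 : ℝ) : ℝ) : ℂ)) +
            Complex.I * (ℓ : ℂ) * ((-θ : ℝ) : ℂ) =
            (Complex.I * ((n : ℂ) + 1 / 2) * ((θ : ℂ) - (π : ℂ) * ((-1 : ℝ) : ℂ)) +
              -Complex.I * ((ℓ : ℂ) + 2 * (n : ℂ) + 1) * (θ : ℂ)) +
            ((-(2 * (n : ℤ) + 1) : ℤ) : ℂ) * ((π : ℂ) * Complex.I) := by
          push_cast; ring
        rw [harg, exp_add_odd_pi_I _ (by exact ⟨-(n : ℤ) - 1, by ring⟩)]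
      linear_combination (Complex.I ^ ((n : ℂ) + 1 / 2) / (2 * (π : ℂ)) *
        Complex.exp (Complex.I * z * (Real.cos θ : ℂ)) *
        Pgamma ((n : ℂ) + 1 / 2) (-Complex.I * z * (1 - (Real.cos θ : ℂ)))) * key
    · rw [Real.sign_of_pos h]
      have key : Complex.exp (Complex.I * ((n : ℂ) + 1 / 2) *
            (((-θ : ℝ) : ℂ) - (π : ℂ) * ((-(1 : ℝ) : ℝ) : ℂ))) *
          Complex.exp (Complex.I * (ℓ : ℂ) * ((-θ : ℝ) : ℂ)) =
          -(Complex.exp (Complex.I * ((n : ℂ) + 1 / 2) *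
            ((θ : ℂ) - (π : ℂ) * ((1 : ℝ) : ℂ))) *
          Complex.exp (-Complex.I * ((ℓ : ℂ) + 2 * (n : ℂ) + 1) * (θ : ℂ))) := by
        rw [← Complex.exp_add, ← Complex.exp_add]
        have harg : Complex.I * ((n : ℂ) + 1 / 2) *
            (((-θ : ℝ) : ℂ) - (π : ℂ) * ((-(1 : ℝ) : ℝ) : ℂ)) +
            Complex.I * (ℓ : ℂ) * ((-θ : ℝ) : ℂ) =
            (Complex.I * ((n : ℂ) + 1 / 2) * ((θ : ℂ) - (π : ℂ) * ((1 : ℝ) : ℂ)) +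
              -Complex.I * ((ℓ : ℂ) + 2 * (n : ℂ) + 1) * (θ : ℂ)) +
            (((2 * (n : ℤ) + 1) : ℤ) : ℂ) * ((π : ℂ) * Complex.I) := by
          push_cast; ring
        rw [harg, exp_add_odd_pi_I _ (by exact ⟨(n : ℤ), by ring⟩)]
      linear_combination (Complex.I ^ ((n : ℂ) + 1 / 2) / (2 * (π : ℂ)) *
        Complex.exp (Complex.I * z * (Real.cos θ : ℂ)) *
        Pgamma ((n : ℂ) + 1 / 2) (-Complex.I * z * (1 - (Real.cos θ : ℂ)))) * key
  have h0 : ∀ᵐ θ : ℝ, θ ≠ 0 := by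
    refine ae_iff.mpr ?_
    simp
  calc (∫ θ in (-π : ℝ)..π, 𝔍 θ * Complex.exp (Complex.I * (ℓ : ℂ) * (θ : ℂ)))
      = ∫ θ in (-π : ℝ)..π, 𝔍 (-θ) * Complex.exp (Complex.I * (ℓ : ℂ) * ((-θ : ℝ) : ℂ)) := by
        rw [intervalIntegral.integral_comp_neg
          (fun θ : ℝ => 𝔍 θ * Complex.exp (Complex.I * (ℓ : ℂ) * (θ : ℂ))), neg_neg]
    _ = ∫ θ in (-π : ℝ)..π,
          -(𝔍 θ * Complex.exp (-Complex.I * ((ℓ : ℂ) + 2 * (n : ℂ) + 1) * (θ : ℂ))) := by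
        refine intervalIntegral.integral_congr_ae ?_
        filter_upwards [h0] with θ hθ _
        exact h2 θ hθ
    _ = -∫ θ in (-π : ℝ)..π,
          𝔍 θ * Complex.exp (-Complex.I * ((ℓ : ℂ) + 2 * (n : ℂ) + 1) * (θ : ℂ)) := by
        rw [intervalIntegral.integral_neg]
end

section
/- Let μ ∈ ℂ with Re μ ≤ −1/2 and 2μ ∉ ℤ. Then, as x → +∞ along the positive real axis, χ_μ(x) is asymptotically equivalent to (i^{1+⟨Re μ⟩}/√π) · [Γ({μ}−1/2) / (Γ(−⟨Re μ⟩) Γ(μ+{μ}))] · (2x)^{{μ}−1} e^{i x}; that is, the ratio of χ_μ(x) to this expression tends to 1 as x → +∞. -/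
open Complex Real MeasureTheory Filter Topology Finset intervalIntegral

noncomputable def chiCoef (μ : ℂ) (j : ℤ) : ℂ :=
  Complex.Gamma ((j : ℂ) + μ - 1 / 2) /
    (Complex.Gamma (j : ℂ) * Complex.Gamma ((j : ℂ) + 2 * μ))

lemma chi_eq (μ z : ℂ) : chi μ z =
    Complex.I ^ μ / (Real.sqrt π : ℂ) * Complex.exp (Complex.I * z) *
      ∑ j ∈ Finset.Icc (1 : ℤ) (-(nearestInt μ.re)),
        chiCoef μ j * (-2 * Complex.I * z) ^ ((j : ℂ) + μ - 1) := rfl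


/-- Limiting form of the corrective term `χ_μ(z)` as `z → ∞` along the positive real
axis (formula (2.24) of the paper). -/
theorem chi_asymptotic_infty (μ : ℂ) (h1 : μ.re ≤ -(1 / 2)) (h2 : ∀ k : ℤ, 2 * μ ≠ (k : ℂ)) :
    Filter.Tendsto (fun x : ℝ => chi μ (x : ℂ) /
        (Complex.I ^ (1 + nearestInt μ.re) / (Real.sqrt π : ℂ) *
          (Complex.Gamma (fracPart μ - 1 / 2) /
            (Complex.Gamma ((-(nearestInt μ.re) : ℤ) : ℂ) * Complex.Gamma (μ + fracPart μ))) *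
          (2 * (x : ℂ)) ^ (fracPart μ - 1) * Complex.exp (Complex.I * (x : ℂ))))
      Filter.atTop (𝓝 1) := by
  set n : ℤ := nearestInt μ.re with hn
  have hn1 : n ≤ -1 := by
    have h : (μ.re - 1 / 2 : ℝ) ≤ (-1 : ℤ) := by push_cast; linarith
    simpa [hn, nearestInt] using Int.ceil_le.mpr h
  have hfrac : fracPart μ = μ - (n : ℂ) := by simp [fracPart, hn]
  have hΓ1 : Complex.Gamma (fracPart μ - 1 / 2) ≠ 0 := by
    refine Complex.Gamma_ne_zero fun m => fun h => ?_
    apply h2 (2 * n + 1 - 2 * m)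
    rw [hfrac] at h
    push_cast
    linear_combination 2 * h
  have hΓ2 : Complex.Gamma ((-n : ℤ) : ℂ) ≠ 0 := by
    refine Complex.Gamma_ne_zero fun m => fun h => ?_
    have : (-n : ℤ) = -(m : ℤ) := by exact_mod_cast h
    omega
  have hΓ3 : Complex.Gamma (μ + fracPart μ) ≠ 0 := by
    refine Complex.Gamma_ne_zero fun m => fun h => ?_
    apply h2 (n - m)
    rw [hfrac] at h
    push_cast
    linear_combination h
  have hcN : chiCoef μ (-n) =
      Complex.Gamma (fracPart μ - 1 / 2) /
        (Complex.Gamma ((-n : ℤ) : ℂ) * Complex.Gamma (μ + fracPart μ)) := by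
    rw [chiCoef, hfrac]
    congr 2 <;> push_cast <;> ring
  have hcN0 : chiCoef μ (-n) ≠ 0 := by
    rw [hcN]
    exact div_ne_zero hΓ1 (mul_ne_zero hΓ2 hΓ3)
  have hlognegI : Complex.log (-Complex.I) = -((π : ℂ) / 2) * Complex.I := by
    apply Complex.ext
    · simp [Complex.log_re]
    · simp [Complex.log_im, Complex.arg_neg_I]
  have hsπ : ((Real.sqrt π : ℝ) : ℂ) ≠ 0 :=
    Complex.ofReal_ne_zero.mpr (Real.sqrt_pos.mpr Real.pi_pos).ne'
  have hIμ : Complex.I ^ μ ≠ 0 := by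
    rw [Complex.cpow_def_of_ne_zero Complex.I_ne_zero]
    exact Complex.exp_ne_zero _
  have hphase : Complex.I ^ μ * (-Complex.I) ^ (fracPart μ - 1) = Complex.I ^ (1 + n) := by
    have h3 : Complex.I ^ (1 + n) = Complex.exp (((1 + n : ℤ) : ℂ) * Complex.log Complex.I) := by
      rw [Complex.exp_int_mul, Complex.exp_log Complex.I_ne_zero]
    rw [Complex.cpow_def_of_ne_zero Complex.I_ne_zero,
      Complex.cpow_def_of_ne_zero (neg_ne_zero.mpr Complex.I_ne_zero), hlognegI, h3,
      Complex.log_I, ← Complex.exp_add]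
    congr 1
    rw [hfrac]
    push_cast
    ring
  have hquot : ∀ x : ℝ, 0 < x →
      chi μ (x : ℂ) /
        (Complex.I ^ (1 + n) / (Real.sqrt π : ℂ) *
          (Complex.Gamma (fracPart μ - 1 / 2) /
            (Complex.Gamma ((-n : ℤ) : ℂ) * Complex.Gamma (μ + fracPart μ))) *
          (2 * (x : ℂ)) ^ (fracPart μ - 1) * Complex.exp (Complex.I * (x : ℂ))) =
      ∑ j ∈ Finset.Icc (1 : ℤ) (-n),
        chiCoef μ j / chiCoef μ (-n) * (-2 * Complex.I * (x : ℂ)) ^ (((j + n : ℤ) : ℂ)) := by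
    intro x hx
    have h2x : (0 : ℝ) < 2 * x := by linarith
    have hz0 : (-2 * Complex.I * (x : ℂ)) ≠ 0 :=
      mul_ne_zero (mul_ne_zero (by norm_num) Complex.I_ne_zero)
        (Complex.ofReal_ne_zero.mpr hx.ne')
    have he : Complex.exp (Complex.I * (x : ℂ)) ≠ 0 := Complex.exp_ne_zero _
    have hlogz : Complex.log (-2 * Complex.I * (x : ℂ)) =
        ((Real.log (2 * x) : ℝ) : ℂ) + -((π : ℂ) / 2) * Complex.I := by
      have habs : ‖(-2 * Complex.I * (x : ℂ))‖ = 2 * x := by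
        simp [Complex.norm_real, abs_of_pos hx]
      have harg : Complex.arg (-2 * Complex.I * (x : ℂ)) = -(π / 2) := by
        have hzz : (-2 * Complex.I * (x : ℂ)) = ((2 * x : ℝ) : ℂ) * (-Complex.I) := by
          push_cast; ring
        rw [hzz, Complex.arg_real_mul _ h2x, Complex.arg_neg_I]
      apply Complex.ext
      · rw [Complex.log_re, habs]; simp
      · rw [Complex.log_im, harg]; simp
    have hpow : ∀ a : ℂ, (-2 * Complex.I * (x : ℂ)) ^ a =
        ((2 * x : ℝ) : ℂ) ^ a * (-Complex.I) ^ a := by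
      intro a
      rw [Complex.cpow_def_of_ne_zero hz0,
        Complex.cpow_def_of_ne_zero (Complex.ofReal_ne_zero.mpr h2x.ne'),
        Complex.cpow_def_of_ne_zero (neg_ne_zero.mpr Complex.I_ne_zero), hlogz, hlognegI,
        ← Complex.ofReal_log h2x.le, ← Complex.exp_add]
      congr 1
      ring
    have hD : Complex.I ^ (1 + n) / (Real.sqrt π : ℂ) *
          (Complex.Gamma (fracPart μ - 1 / 2) /
            (Complex.Gamma ((-n : ℤ) : ℂ) * Complex.Gamma (μ + fracPart μ))) *
          (2 * (x : ℂ)) ^ (fracPart μ - 1) * Complex.exp (Complex.I * (x : ℂ)) =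
        Complex.I ^ μ / (Real.sqrt π : ℂ) * Complex.exp (Complex.I * (x : ℂ)) *
          (chiCoef μ (-n) * (-2 * Complex.I * (x : ℂ)) ^ (((-n : ℤ) : ℂ) + μ - 1)) := by
      have hexp : (((-n : ℤ) : ℂ)) + μ - 1 = fracPart μ - 1 := by
        rw [hfrac]; push_cast; ring
      have h2c : (2 * (x : ℂ)) = ((2 * x : ℝ) : ℂ) := by push_cast; ring
      rw [hexp, hpow (fracPart μ - 1), hcN, h2c, ← hphase]
      ring
    rw [chi_eq, ← hn, hD, mul_div_mul_left _ _ (mul_ne_zero (div_ne_zero hIμ hsπ) he),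
      Finset.sum_div]
    refine Finset.sum_congr rfl fun j hj => ?_
    rw [mul_div_mul_comm, ← Complex.cpow_sub _ _ hz0]
    congr 1
    push_cast
    ring
  have key : ∀ j ∈ Finset.Icc (1 : ℤ) (-n),
      Filter.Tendsto (fun x : ℝ => chiCoef μ j / chiCoef μ (-n) *
          (-2 * Complex.I * (x : ℂ)) ^ (((j + n : ℤ) : ℂ)))
        Filter.atTop (𝓝 (if j = -n then 1 else 0)) := by
    intro j hj
    rcases eq_or_ne j (-n) with rfl | hne
    · rw [if_pos rfl]
      have h0 : ((-n + n : ℤ) : ℂ) = 0 := by push_cast; ring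
      simp only [h0, Complex.cpow_zero, mul_one, div_self hcN0]
      exact tendsto_const_nhds
    · rw [if_neg hne]
      have hjlt : j + n < 0 := by
        have := (Finset.mem_Icc.mp hj).2; omega
      have h0 : Filter.Tendsto (fun x : ℝ => ((x : ℂ)) ^ (j + n)) Filter.atTop (𝓝 0) := by
        have h1' := tendsto_zpow_atTop_zero (𝕜 := ℝ) hjlt
        have h2' := (Complex.continuous_ofReal.tendsto 0).comp h1'
        simpa [Function.comp_def, Complex.ofReal_zpow] using h2'
      have h3' : Filter.Tendsto (fun x : ℝ =>
          chiCoef μ j / chiCoef μ (-n) * ((-2 * Complex.I) ^ (j + n) * ((x : ℂ)) ^ (j + n)))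
          Filter.atTop (𝓝 0) := by
        have := (h0.const_mul ((-2 * Complex.I) ^ (j + n))).const_mul
          (chiCoef μ j / chiCoef μ (-n))
        simpa using this
      refine h3'.congr fun x => ?_
      rw [Complex.cpow_intCast, ← mul_zpow]
  have hmem : -n ∈ Finset.Icc (1 : ℤ) (-n) := Finset.mem_Icc.mpr ⟨by omega, le_rfl⟩
  have hsum1 : (∑ j ∈ Finset.Icc (1 : ℤ) (-n), if j = -n then (1 : ℂ) else 0) = 1 := by
    rw [Finset.sum_ite_eq' _ _ (fun _ => (1 : ℂ)), if_pos hmem]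
  have hT := tendsto_finset_sum (Finset.Icc (1 : ℤ) (-n)) key
  rw [hsum1] at hT
  refine Filter.Tendsto.congr' ?_ hT
  filter_upwards [eventually_gt_atTop (0 : ℝ)] with x hx
  exact (hquot x hx).symm
end

section
/- For every w ∈ ℂ∖(−∞,0], the limit lim_{a→0, a≠0} [P(a,w) − P(−a,w)] / sin(πa) = −(2/π) Γ(0,w) holds, the limit being taken over complex a tending to 0. -/
open Complex Real MeasureTheory Filter Topology Finset intervalIntegral

section Aux
open Finset Metric

lemma altsum (n : ℕ) : ∑ j ∈ range (n+1), (-1:ℂ)^j * ((n+1).choose (j+1) : ℂ) = 1 := by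
  have h := Int.alternating_sum_range_choose_of_ne (Nat.succ_ne_zero n)
  have h2 : ((∑ i ∈ range (n + 2), (-1:ℤ) ^ i * ((n+1).choose i : ℤ) : ℤ) : ℂ) = 0 := by
    rw [h]; norm_num
  push_cast at h2
  rw [Finset.sum_range_succ'] at h2
  simp only [pow_succ, pow_zero, Nat.choose_zero_right, Nat.cast_one, one_mul] at h2
  have h3 : ∑ j ∈ range (n+1), (-1:ℂ)^j * (-1) * ((n+1).choose (j+1) : ℂ) = -1 := by
    linear_combination h2
  calc ∑ j ∈ range (n+1), (-1:ℂ)^j * ((n+1).choose (j+1) : ℂ)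
      = -∑ j ∈ range (n+1), (-1:ℂ)^j * (-1) * ((n+1).choose (j+1) : ℂ) := by
        rw [← Finset.sum_neg_distrib]; exact Finset.sum_congr rfl fun j _ => by ring
    _ = 1 := by rw [h3]; ring

lemma idc (n : ℕ) : ∑ k ∈ range (n+1), (-1:ℂ)^(k+1) * (n.choose k : ℂ) / k
    = ((harmonic n : ℚ) : ℂ) := by
  induction n with
  | zero => simp
  | succ n ih =>
    rw [Finset.sum_range_succ'] at ih ⊢
    rw [harmonic_succ]
    push_cast at ih ⊢
    simp only [Nat.cast_zero, div_zero, add_zero] at ih ⊢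
    have hn : ((n:ℂ)+1) ≠ 0 := Nat.cast_add_one_ne_zero n
    have pascal : ∀ j ∈ range (n+1), (-1:ℂ)^(j+1+1) * (((n+1).choose (j+1) : ℕ) : ℂ) / ((j:ℂ)+1)
        = (-1:ℂ)^(j+1+1) * ((n.choose (j+1) : ℕ) : ℂ) / ((j:ℂ)+1)
          + (-1:ℂ)^j * (((n+1).choose (j+1) : ℕ) : ℂ) / ((n:ℂ)+1) := by
      intro j _
      have hj : ((j:ℂ)+1) ≠ 0 := Nat.cast_add_one_ne_zero j
      have hch : (((n+1).choose (j+1) : ℕ) : ℂ) = (n.choose (j+1) : ℂ) + (n.choose j : ℂ) := by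
        rw [Nat.choose_succ_succ]; push_cast; ring
      have hkey : ((j:ℂ)+1) * (((n+1).choose (j+1) : ℕ) : ℂ) = ((n:ℂ)+1) * ((n.choose j : ℕ) : ℂ) := by
        have h5 : (((n+1) * (n.choose j) : ℕ) : ℂ) = (((n+1).choose (j+1) * (j+1) : ℕ) : ℂ) := by
          rw [Nat.add_one_mul_choose_eq]
        push_cast at h5
        linear_combination -h5
      have hd : ((n.choose j : ℕ) : ℂ) / ((j:ℂ)+1) = (((n+1).choose (j+1) : ℕ) : ℂ) / ((n:ℂ)+1) := by
        rw [div_eq_div_iff hj hn]; linear_combination -hkey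
      calc (-1:ℂ)^(j+1+1) * (((n+1).choose (j+1) : ℕ) : ℂ) / ((j:ℂ)+1)
          = (-1:ℂ)^(j+1+1) * ((n.choose (j+1) : ℕ) : ℂ) / ((j:ℂ)+1)
            + (-1:ℂ)^j * (((n.choose j : ℕ) : ℂ) / ((j:ℂ)+1)) := by rw [hch]; ring
        _ = _ := by rw [hd]; ring
    rw [Finset.sum_congr rfl pascal, Finset.sum_add_distrib]
    have hA : ∑ j ∈ range (n+1), (-1:ℂ)^(j+1+1) * ((n.choose (j+1) : ℕ) : ℂ) / ((j:ℂ)+1)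
        = ((harmonic n : ℚ) : ℂ) := by
      rw [Finset.sum_range_succ, Nat.choose_succ_self, ← ih]; push_cast; ring
    have hB : ∑ j ∈ range (n+1), (-1:ℂ)^j * (((n+1).choose (j+1) : ℕ) : ℂ) / ((n:ℂ)+1)
        = ((n:ℂ)+1)⁻¹ := by
      rw [← Finset.sum_div, altsum n, one_div]
    rw [hA, hB]


noncomputable def TT (w : ℂ) : ℂ :=
  ∑' k : ℕ, (-w) ^ (k + 1) / (((k : ℂ) + 1) * ((k + 1).factorial : ℂ))

lemma hexpB (w : ℂ) : HasSum (fun k : ℕ => w ^ k / (k.factorial : ℂ)) (Complex.exp w) := by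
  have hs : Summable (fun k : ℕ => w ^ k / (k.factorial : ℂ)) := by
    refine Summable.of_norm ?_
    have : (fun k : ℕ => ‖w ^ k / (k.factorial : ℂ)‖) = fun k => ‖w‖ ^ k / k.factorial := by
      funext k; rw [norm_div, norm_pow]; simp
    rw [this]; exact Real.summable_pow_div_factorial _
  have := hs.hasSum
  rwa [show ∑' k : ℕ, w ^ k / (k.factorial : ℂ) = Complex.exp w by
    rw [Complex.exp_eq_exp_ℂ, NormedSpace.exp_eq_tsum_div]] at this

lemma cauchy_term (w : ℂ) (n k : ℕ) (hkn : k ≤ n) :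
    (-w) ^ k / ((k : ℂ) * (k.factorial : ℂ)) * (w ^ (n-k) / ((n-k).factorial : ℂ))
      = ((-1:ℂ)^(k+1) * (n.choose k : ℂ)/k) * (-(w^n/(n.factorial : ℂ))) := by
  rcases Nat.eq_zero_or_pos k with rfl | hkpos
  · simp
  have hk : k ≠ 0 := hkpos.ne'
  have hfac : ((n.choose k : ℂ)) * (k.factorial : ℂ) * ((n-k).factorial : ℂ) = (n.factorial : ℂ) := by
    exact_mod_cast congrArg (Nat.cast : ℕ → ℂ) (Nat.choose_mul_factorial_mul_factorial hkn)
  have h1 : (k:ℂ) ≠ 0 := Nat.cast_ne_zero.mpr hk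
  have h2 : (k.factorial : ℂ) ≠ 0 := Nat.cast_ne_zero.mpr k.factorial_ne_zero
  have h3 : ((n-k).factorial : ℂ) ≠ 0 := Nat.cast_ne_zero.mpr (n-k).factorial_ne_zero
  have h4 : (n.factorial : ℂ) ≠ 0 := Nat.cast_ne_zero.mpr n.factorial_ne_zero
  have hpow2 : w ^ k * w ^ (n-k) = w ^ n := by rw [← pow_add, Nat.add_sub_cancel' hkn]
  field_simp
  linear_combination ((n.factorial : ℂ) * (-1:ℂ)^k) * hpow2 - (w^n * (-1:ℂ)^k) * hfac

lemma hHsum (w : ℂ) :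
    HasSum (fun n : ℕ => -(((harmonic n : ℚ) : ℂ) * w ^ n / (n.factorial : ℂ)))
      (TT w * Complex.exp w) := by
  set A : ℕ → ℂ := fun k => (-w) ^ k / ((k : ℂ) * (k.factorial : ℂ)) with hA
  set B : ℕ → ℂ := fun k => w ^ k / (k.factorial : ℂ) with hB
  have hAnorm : Summable fun k => ‖A k‖ := by
    refine Summable.of_nonneg_of_le (fun k => norm_nonneg _) (fun k => ?_)
      (Real.summable_pow_div_factorial ‖w‖)
    simp only [hA, norm_div, norm_pow, norm_neg, norm_mul, Complex.norm_natCast]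
    rcases Nat.eq_zero_or_pos k with rfl | hk
    · simp
    · refine div_le_div_of_nonneg_left (by positivity) (by positivity) ?_
      have hk1 : (1:ℝ) ≤ (k:ℝ) := by exact_mod_cast hk
      have hf : (0:ℝ) < (k.factorial : ℝ) := by positivity
      nlinarith
  have hBnorm : Summable fun k => ‖B k‖ := by
    have : (fun k : ℕ => ‖B k‖) = fun k => ‖w‖ ^ k / k.factorial := by
      funext k; simp only [hB, norm_div, norm_pow]; simp
    rw [this]; exact Real.summable_pow_div_factorial _
  have htA : ∑' k, A k = TT w := by
    rw [Summable.tsum_eq_zero_add hAnorm.of_norm]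
    simp only [hA]
    rw [show ((-w) ^ 0 / (((0:ℕ):ℂ) * (((0:ℕ).factorial : ℕ) : ℂ)) : ℂ) = 0 by simp]
    rw [zero_add, TT]
    refine tsum_congr fun k => ?_
    push_cast
    ring_nf
  have htB : ∑' k, B k = Complex.exp w := (hexpB w).tsum_eq
  have hmain := hasSum_sum_range_mul_of_summable_norm hAnorm hBnorm
  rw [htA, htB] at hmain
  have hfin : (fun n => ∑ k ∈ range (n + 1), A k * B (n - k))
      = fun n : ℕ => -(((harmonic n : ℚ) : ℂ) * w ^ n / (n.factorial : ℂ)) := by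
    funext n
    have : ∀ k ∈ range (n+1), A k * B (n-k)
        = ((-1:ℂ)^(k+1) * (n.choose k : ℂ)/k) * (-(w^n/(n.factorial : ℂ))) := by
      intro k hkk
      exact cauchy_term w n k (Nat.lt_succ_iff.mp (mem_range.mp hkk))
    rw [Finset.sum_congr rfl this, ← Finset.sum_mul, idc n]
    ring
  rwa [hfin] at hmain


noncomputable def invG : ℂ → ℂ := fun s => (Complex.Gamma s)⁻¹

lemma differentiable_invG : Differentiable ℂ invG := Complex.differentiable_one_div_Gamma

lemma invG_rec (s : ℂ) : invG s = s * invG (s + 1) := by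
  have := Complex.one_div_Gamma_eq_self_mul_one_div_Gamma_add_one s
  simpa [invG, one_div] using this

lemma invG_bound {C : ℝ} (hC : ∀ z ∈ closedBall (0:ℂ) 3, ‖invG z‖ ≤ C) :
    ∀ (m : ℕ) (z : ℂ), ‖z - ((m:ℂ) + 2)‖ ≤ 1 → ‖invG z‖ * m.factorial ≤ C := by
  intro m
  induction m with
  | zero =>
    intro z hz
    simp only [Nat.cast_zero, zero_add, Nat.factorial_zero, Nat.cast_one, mul_one]
    refine hC z ?_
    rw [mem_closedBall]
    calc dist z 0 = ‖(z - 2) + 2‖ := by simp [dist_eq_norm]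
      _ ≤ ‖z - 2‖ + ‖(2:ℂ)‖ := norm_add_le _ _
      _ ≤ 1 + 2 := add_le_add (by simpa using hz) (by norm_num)
      _ = 3 := by norm_num
  | succ m ih =>
    intro z hz
    have hz3 : ‖z - ((m:ℂ) + 3)‖ ≤ 1 := by
      have : z - ((m:ℂ) + 3) = z - ((((m:ℕ)+1 : ℕ):ℂ) + 2) := by push_cast; ring
      rw [this]; exact hz
    have hz' : ‖(z - 1) - ((m:ℂ) + 2)‖ ≤ 1 := by
      have : (z - 1) - ((m:ℂ) + 2) = z - ((m:ℂ) + 3) := by ring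
      rw [this]; exact hz3
    have hIH := ih (z - 1) hz'
    have hrec : ‖invG (z-1)‖ = ‖z - 1‖ * ‖invG z‖ := by
      have h := invG_rec (z - 1)
      rw [sub_add_cancel] at h
      rw [h, norm_mul]
    have hnorm : ((m:ℝ) + 1) ≤ ‖z - 1‖ := by
      have h1 : ‖((m:ℂ) + 2)‖ - ‖((m:ℂ)+3) - z‖ ≤ ‖((m:ℂ)+2) - (((m:ℂ)+3) - z)‖ :=
        norm_sub_norm_le _ _
      have h2 : ((m:ℂ)+2) - (((m:ℂ)+3) - z) = z - 1 := by ring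
      have h3 : ‖((m:ℂ)+3) - z‖ = ‖z - ((m:ℂ)+3)‖ := norm_sub_rev _ _
      have h4 : ‖((m:ℂ) + 2)‖ = (m:ℝ) + 2 := by
        rw [show ((m:ℂ) + 2) = (((m+2 : ℕ)):ℂ) by push_cast; ring, Complex.norm_natCast]
        push_cast; ring
      rw [h2, h3, h4] at h1
      linarith
    have hfact : ((m+1).factorial : ℝ) = ((m:ℝ)+1) * (m.factorial : ℝ) := by
      rw [Nat.factorial_succ]; push_cast; ring
    have hm0 : (0:ℝ) ≤ ‖invG z‖ := norm_nonneg _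
    have hf0 : (0:ℝ) ≤ (m.factorial : ℝ) := by positivity
    calc ‖invG z‖ * ((m+1).factorial : ℝ) = (((m:ℝ)+1) * ‖invG z‖) * m.factorial := by
          rw [hfact]; ring
      _ ≤ (‖z-1‖ * ‖invG z‖) * m.factorial := by
          apply mul_le_mul_of_nonneg_right (mul_le_mul_of_nonneg_right hnorm hm0) hf0
      _ = ‖invG (z-1)‖ * m.factorial := by rw [hrec]
      _ ≤ C := hIH

lemma hasDerivAt_invG_nat (m : ℕ) :
    HasDerivAt invG
      (((Real.eulerMascheroniConstant : ℂ) - ((harmonic m : ℚ) : ℂ)) / (m.factorial : ℂ))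
      ((m:ℂ) + 1) := by
  have h := Complex.hasDerivAt_Gamma_nat m
  have hΓ : Complex.Gamma ((m:ℂ) + 1) = (m.factorial : ℂ) := Complex.Gamma_nat_eq_factorial m
  have h2 := h.inv (by rw [hΓ]; exact_mod_cast Nat.cast_ne_zero.mpr m.factorial_ne_zero)
  have hfne : (m.factorial : ℂ) ≠ 0 := Nat.cast_ne_zero.mpr m.factorial_ne_zero
  refine HasDerivAt.congr_deriv h2 ?_
  rw [hΓ]
  field_simp
  ring

lemma hasDerivAt_S (w : ℂ) :
    HasDerivAt (fun a : ℂ => ∑' m : ℕ, w ^ m * invG (a + m + 1))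
      (∑' m : ℕ, w ^ m * deriv invG ((m:ℂ) + 1)) 0 := by
  obtain ⟨C, hC⟩ := (isCompact_closedBall (0:ℂ) 3).exists_bound_of_continuousOn
    differentiable_invG.continuous.continuousOn
  have hC0 : 0 ≤ C := le_trans (norm_nonneg _) (hC 0 (by simp))
  set u : ℕ → ℝ := fun m => Nat.rec (2*C) (fun k _ => ‖w‖^(k+1) * (2*(C/(k.factorial)))) m with hu
  have hu0 : u 0 = 2*C := rfl
  have huS : ∀ k, u (k+1) = ‖w‖^(k+1) * (2*(C/(k.factorial))) := fun k => rfl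
  have hu_sum : Summable u := by
    rw [← summable_nat_add_iff 1]
    have : (fun k => u (k+1)) = fun k => (2*C*‖w‖) * (‖w‖^k/(k.factorial)) := by
      funext k; rw [huS, pow_succ]; ring
    rw [this]
    exact (Real.summable_pow_div_factorial ‖w‖).mul_left _
  have hball : (0:ℂ) ∈ Metric.ball (0:ℂ) 2⁻¹ := Metric.mem_ball_self (by norm_num)
  have hderiv_bound : ∀ (m : ℕ) (a : ℂ), a ∈ Metric.ball (0:ℂ) 2⁻¹ →
      ‖w ^ m * deriv invG (a + m + 1)‖ ≤ u m := by
    intro m a ha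
    rw [Metric.mem_ball, dist_zero_right] at ha
    have hsphere : ∀ z ∈ Metric.sphere (a + (m:ℂ) + 1) 2⁻¹,
        ‖invG z‖ ≤ (Nat.rec C (fun k _ => C/(k.factorial)) m : ℝ) := by
      intro z hz
      rw [Metric.mem_sphere, dist_eq_norm] at hz
      cases m with
      | zero =>
        refine hC z ?_
        rw [Metric.mem_closedBall, dist_zero_right]
        have : z = (z - (a + (0:ℕ) + 1)) + a + 1 := by ring
        rw [this]
        calc ‖z - (a + (0:ℕ) + 1) + a + 1‖ ≤ ‖z - (a + (0:ℕ) + 1) + a‖ + ‖(1:ℂ)‖ := norm_add_le _ _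
          _ ≤ ‖z - (a + (0:ℕ) + 1)‖ + ‖a‖ + ‖(1:ℂ)‖ := by
              have := norm_add_le (z - (a + (0:ℕ) + 1)) a
              linarith [norm_add_le (z - (a + (0:ℕ) + 1) + a) 1]
          _ ≤ 2⁻¹ + 2⁻¹ + 1 := by
              rw [hz]; gcongr <;> simp [ha.le]
          _ ≤ 3 := by norm_num
      | succ k =>
        have hzz : ‖z - ((k:ℂ) + 2)‖ ≤ 1 := by
          have hre : z - ((k:ℂ) + 2) = (z - (a + ((k+1:ℕ):ℂ) + 1)) + a := by push_cast; ring
          rw [hre]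
          calc ‖(z - (a + ((k+1:ℕ):ℂ) + 1)) + a‖ ≤ ‖z - (a + ((k+1:ℕ):ℂ) + 1)‖ + ‖a‖ :=
              norm_add_le _ _
            _ ≤ 2⁻¹ + 2⁻¹ := by rw [hz]; gcongr
            _ = 1 := by norm_num
        have := invG_bound hC k z hzz
        rw [show (Nat.rec C (fun k _ => C/(k.factorial)) (k+1) : ℝ) = C / (k.factorial) from rfl]
        rw [le_div_iff₀ (by positivity)]
        exact this
    have hcb := norm_deriv_le_of_forall_mem_sphere_norm_le (by norm_num : (0:ℝ) < 2⁻¹)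
      (differentiable_invG.diffContOnCl) hsphere
    rw [norm_mul, norm_pow]
    cases m with
    | zero =>
      rw [hu0]
      have hcb' : ‖deriv invG (a + ((0:ℕ):ℂ) + 1)‖ ≤ C / 2⁻¹ := hcb
      simpa using hcb'.trans_eq (by field_simp)
    | succ k =>
      rw [huS]
      have hcb' : ‖deriv invG (a + ((k+1:ℕ):ℂ) + 1)‖ ≤ (C/(k.factorial)) / 2⁻¹ := hcb
      have h2 : ‖deriv invG (a + ((k+1:ℕ):ℂ) + 1)‖ ≤ 2*(C/(k.factorial)) :=
        hcb'.trans_eq (by field_simp)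
      exact mul_le_mul_of_nonneg_left h2 (by positivity)
  have hg : ∀ (m : ℕ) (y : ℂ), y ∈ Metric.ball (0:ℂ) 2⁻¹ →
      HasDerivAt (fun a : ℂ => w ^ m * invG (a + m + 1)) (w ^ m * deriv invG (y + m + 1)) y := by
    intro m y _
    have h1 : HasDerivAt (fun a : ℂ => a + (m:ℂ) + 1) 1 y := by
      simpa using ((hasDerivAt_id y).add_const ((m:ℂ))).add_const (1:ℂ)
    have h2 := ((differentiable_invG (y + m + 1)).hasDerivAt).comp y h1
    simpa using h2.const_mul (w ^ m)
  have hg0 : Summable fun m : ℕ => w ^ m * invG ((0:ℂ) + m + 1) := by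
    refine Summable.of_norm ?_
    have : (fun m : ℕ => ‖w ^ m * invG ((0:ℂ) + m + 1)‖)
        = fun m => ‖w‖ ^ m * ((m.factorial : ℝ))⁻¹ := by
      funext m
      rw [norm_mul, norm_pow]
      congr 1
      rw [show ((0:ℂ) + m + 1) = ((m:ℂ) + 1) by ring, invG]
      simp only [Complex.Gamma_nat_eq_factorial]
      rw [norm_inv, Complex.norm_natCast]
    rw [this]
    exact ((Real.summable_pow_div_factorial ‖w‖).congr (by intro m; rw [div_eq_mul_inv])).mul_left 1
      |>.congr (by intro m; ring)
  have hmain := hasDerivAt_tsum_of_isPreconnected hu_sum Metric.isOpen_ball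
    (convex_ball (0:ℂ) 2⁻¹).isPreconnected hg hderiv_bound hball hg0 hball
  have : (∑' m : ℕ, w ^ m * deriv invG ((0:ℂ) + m + 1))
      = ∑' m : ℕ, w ^ m * deriv invG ((m:ℂ) + 1) := by
    refine tsum_congr fun m => ?_
    rw [show ((0:ℂ) + m + 1) = ((m:ℂ) + 1) by ring]
  rwa [this] at hmain

lemma hasDerivAt_Pgamma0 (w : ℂ) (hw : w ≠ 0) :
    HasDerivAt (fun a : ℂ => Pgamma a w) (-Gamma0 w) 0 := by
  have hfun : (fun a : ℂ => Pgamma a w)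
      = fun a => w ^ a * (Complex.exp (-w) * ∑' m : ℕ, w ^ m * invG (a + m + 1)) := by
    funext a
    rw [Pgamma, gammaStar]
    have : (∑' m : ℕ, w ^ m / Complex.Gamma (a + m + 1))
        = ∑' m : ℕ, w ^ m * invG (a + m + 1) := tsum_congr fun m => div_eq_mul_inv _ _
    rw [this]
  have hS := hasDerivAt_S w
  have hcp : HasDerivAt (fun a : ℂ => w ^ a) (w ^ (0:ℂ) * Complex.log w) 0 :=
    (hasStrictDerivAt_const_cpow (Or.inl hw)).hasDerivAt
  have hprod := hcp.mul (hS.const_mul (Complex.exp (-w)))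
  rw [hfun]
  refine HasDerivAt.congr_deriv hprod ?_
  -- identify the sums
  have hS0 : (∑' m : ℕ, w ^ m * invG ((0:ℂ) + m + 1)) = Complex.exp w := by
    rw [show (∑' m : ℕ, w ^ m * invG ((0:ℂ) + m + 1))
        = ∑' m : ℕ, w ^ m / (m.factorial : ℂ) from tsum_congr fun m => by
      rw [show ((0:ℂ) + m + 1) = ((m:ℂ) + 1) by ring, invG]
      simp only [Complex.Gamma_nat_eq_factorial]
      rw [div_eq_mul_inv]]
    exact (hexpB w).tsum_eq
  have hD : (∑' m : ℕ, w ^ m * deriv invG ((m:ℂ) + 1))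
      = (Real.eulerMascheroniConstant : ℂ) * Complex.exp w + TT w * Complex.exp w := by
    rw [show (∑' m : ℕ, w ^ m * deriv invG ((m:ℂ) + 1))
        = ∑' m : ℕ, w ^ m * (((Real.eulerMascheroniConstant : ℂ) - ((harmonic m : ℚ) : ℂ))
            / (m.factorial : ℂ)) from tsum_congr fun m => by
      rw [(hasDerivAt_invG_nat m).deriv]]
    refine HasSum.tsum_eq ?_
    have h1 := (hexpB w).mul_left (Real.eulerMascheroniConstant : ℂ)
    have h2 := hHsum w
    have h3 := h1.add h2
    have heq : (fun m : ℕ => (Real.eulerMascheroniConstant : ℂ) * (w ^ m / (m.factorial : ℂ))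
        + -(((harmonic m : ℚ) : ℂ) * w ^ m / (m.factorial : ℂ)))
        = fun m : ℕ => w ^ m * (((Real.eulerMascheroniConstant : ℂ) - ((harmonic m : ℚ) : ℂ))
            / (m.factorial : ℂ)) := by
      funext m; ring
    rwa [heq] at h3
  rw [hS0, hD, cpow_zero]
  have he : Complex.exp (-w) * Complex.exp w = 1 := by
    rw [← Complex.exp_add]; simp
  have hG0 : Gamma0 w = -(Real.eulerMascheroniConstant : ℂ) - Complex.log w - TT w := rfl
  rw [hG0]
  linear_combination (Complex.log w + (Real.eulerMascheroniConstant : ℂ) + TT w) * he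


end Aux

/-- The limit `lim_{a→0} (P(a,w) - P(-a,w))/sin(πa) = -(2/π) Γ(0,w)`
(formula (3.5) of the paper). -/
theorem Pgamma_diff_div_sin_tendsto (w : ℂ) (hw : w ∈ Complex.slitPlane) :
    Filter.Tendsto (fun a : ℂ => (Pgamma a w - Pgamma (-a) w) / Complex.sin ((π : ℂ) * a))
      (𝓝[≠] 0) (𝓝 (-(2 / (π : ℂ)) * Gamma0 w)) := by
  have hw0 : w ≠ 0 := Complex.slitPlane_ne_zero hw
  have hP := hasDerivAt_Pgamma0 w hw0
  have hP' : HasDerivAt (fun a : ℂ => Pgamma a w) (-Gamma0 w) (-(0:ℂ)) := by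
    rw [neg_zero]; exact hP
  have hneg : HasDerivAt (fun a : ℂ => -a) (-1 : ℂ) 0 := hasDerivAt_neg' 0
  have hF : HasDerivAt (fun a : ℂ => Pgamma (-a) w) ((-Gamma0 w) * (-1)) 0 :=
    hP'.comp 0 hneg
  have hFdiff : HasDerivAt (fun a : ℂ => Pgamma a w - Pgamma (-a) w)
      (-Gamma0 w - (-Gamma0 w) * (-1)) 0 := hP.sub hF
  have hF0 : Pgamma (0:ℂ) w - Pgamma (-(0:ℂ)) w = 0 := by rw [neg_zero, sub_self]
  have h1 : Filter.Tendsto (fun a : ℂ => (Pgamma a w - Pgamma (-a) w) / a) (𝓝[≠] 0)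
      (𝓝 (-Gamma0 w - (-Gamma0 w) * (-1))) := by
    have h := hasDerivAt_iff_tendsto_slope.mp hFdiff
    have hsl : slope (fun a : ℂ => Pgamma a w - Pgamma (-a) w) 0
        = fun a : ℂ => (Pgamma a w - Pgamma (-a) w) / a := by
      funext a
      rw [slope_def_field, hF0, sub_zero, sub_zero]
    rwa [hsl] at h
  have hG : HasDerivAt (fun a : ℂ => Complex.sin ((π : ℂ) * a)) ((π : ℂ)) 0 := by
    have h := (Complex.hasDerivAt_sin ((π:ℂ) * 0)).comp 0
      ((hasDerivAt_id (0:ℂ)).const_mul ((π:ℂ)))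
    simp at h; exact h
  have h2 : Filter.Tendsto (fun a : ℂ => Complex.sin ((π : ℂ) * a) / a) (𝓝[≠] 0)
      (𝓝 ((π : ℂ))) := by
    have h := hasDerivAt_iff_tendsto_slope.mp hG
    have hsl : slope (fun a : ℂ => Complex.sin ((π : ℂ) * a)) 0
        = fun a : ℂ => Complex.sin ((π : ℂ) * a) / a := by
      funext a
      rw [slope_def_field, mul_zero, Complex.sin_zero, sub_zero, sub_zero]
    rwa [hsl] at h
  have hπ : ((π : ℝ) : ℂ) ≠ 0 := Complex.ofReal_ne_zero.mpr Real.pi_ne_zero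
  have h3 := h1.mul (h2.inv₀ hπ)
  have h4 : (fun a : ℂ => ((Pgamma a w - Pgamma (-a) w) / a)
      * (Complex.sin ((π : ℂ) * a) / a)⁻¹)
      =ᶠ[𝓝[≠] (0:ℂ)] fun a : ℂ => (Pgamma a w - Pgamma (-a) w) / Complex.sin ((π : ℂ) * a) := by
    filter_upwards [self_mem_nhdsWithin] with a ha
    have ha' : a ≠ 0 := ha
    rw [inv_div, div_mul_div_comm, mul_comm (Pgamma a w - Pgamma (-a) w) a,
      mul_div_mul_left _ _ ha']
  have h5 := h3.congr' h4
  rwa [show (-Gamma0 w - (-Gamma0 w) * (-1)) * ((π:ℂ))⁻¹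
      = -(2 / (π : ℂ)) * Gamma0 w by ring] at h5
end
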